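/- Under the same setting, the Doob martingale Y_i = E[CF_n(s) | X₀,…,X_{i-1}] satisfies E[(Y_i − Y_{i-1})² | F_{i-1}] ≤ 2/n almost surely for every i ∈ {1,…,n}. -/

import Mathlib

open MeasureTheory Finset

noncomputable def ofdm (n : ℕ) (T : ℝ) (x : Fin n → ℂ) (t : ℝ) : ℂ :=
  ((Real.sqrt n : ℝ) : ℂ)⁻¹ *
    ∑ i : Fin n, x i * Complex.exp (Complex.I * ((2 * Real.pi * (i : ℕ) * t / T : ℝ) : ℂ))

noncomputable def crest (n : ℕ) (T : ℝ) (x : Fin n → ℂ) : ℝ :=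
  sSup ((fun t => ‖ofdm n T x t‖) '' Set.Icc (0 : ℝ) T)

/-- The uniform distribution on the M-ary PSK constellation. -/
noncomputable def pskMeasure (M : ℕ) : Measure ℂ :=
  (M : ENNReal)⁻¹ •
    ∑ l ∈ Finset.range M,
      Measure.dirac (Complex.exp (Complex.I * (((2 * l + 1) * Real.pi / M : ℝ) : ℂ)))


namespace CrestAux

lemma norm_exp_I_mul_real (r : ℝ) : ‖Complex.exp (Complex.I * (r:ℂ))‖ = 1 := by
  rw [Complex.norm_exp]
  simp

variable {n : ℕ} {T : ℝ}

lemma cont_ofdm (x : Fin n → ℂ) : Continuous fun t => ‖ofdm n T x t‖ := by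
  unfold ofdm; fun_prop

lemma bddAbove_img (x : Fin n → ℂ) :
    BddAbove ((fun t => ‖ofdm n T x t‖) '' Set.Icc (0 : ℝ) T) :=
  ((isCompact_Icc).image (cont_ofdm x)).bddAbove

lemma crest_nonneg (hT : 0 < T) (x : Fin n → ℂ) : 0 ≤ crest n T x :=
  le_trans (norm_nonneg _) (le_csSup (bddAbove_img x)
    (Set.mem_image_of_mem _ ⟨le_rfl, hT.le⟩))

lemma ofdm_norm_le_crest (hT : 0 < T) (x : Fin n → ℂ) {t : ℝ} (ht : t ∈ Set.Icc (0:ℝ) T) :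
    ‖ofdm n T x t‖ ≤ crest n T x :=
  le_csSup (bddAbove_img x) (Set.mem_image_of_mem _ ht)

lemma crest_le_add (hT : 0 < T) (x y : Fin n → ℂ) :
    crest n T x ≤ crest n T y + (Real.sqrt n)⁻¹ * ∑ j, ‖x j - y j‖ := by
  apply Real.sSup_le
  · rintro _ ⟨t, ht, rfl⟩
    have hdiff : ofdm n T x t - ofdm n T y t =
        ((Real.sqrt n : ℝ) : ℂ)⁻¹ *
          ∑ j : Fin n, (x j - y j) *
            Complex.exp (Complex.I * ((2 * Real.pi * (j : ℕ) * t / T : ℝ) : ℂ)) := by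
      unfold ofdm
      rw [← mul_sub, ← Finset.sum_sub_distrib]
      congr 1
      refine Finset.sum_congr rfl fun j _ => ?_
      ring
    have h1 : ‖ofdm n T x t - ofdm n T y t‖ ≤ (Real.sqrt n)⁻¹ * ∑ j, ‖x j - y j‖ := by
      rw [hdiff, norm_mul]
      have h2 : ‖(((Real.sqrt n : ℝ) : ℂ))⁻¹‖ = (Real.sqrt n)⁻¹ := by
        rw [norm_inv, Complex.norm_real, Real.norm_eq_abs,
          abs_of_nonneg (Real.sqrt_nonneg _)]
      rw [h2]
      gcongr
      refine le_trans (norm_sum_le _ _) ?_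
      refine Finset.sum_le_sum fun j _ => ?_
      rw [norm_mul, norm_exp_I_mul_real, mul_one]
    calc ‖ofdm n T x t‖ ≤ ‖ofdm n T y t‖ + ‖ofdm n T x t - ofdm n T y t‖ := by
          have := norm_sub_norm_le (ofdm n T x t) (ofdm n T y t)
          linarith [abs_le.mp (abs_norm_sub_norm_le (ofdm n T x t) (ofdm n T y t))]
      _ ≤ crest n T y + (Real.sqrt n)⁻¹ * ∑ j, ‖x j - y j‖ :=
          add_le_add (ofdm_norm_le_crest hT y ht) h1
  · have : (0:ℝ) ≤ (Real.sqrt n)⁻¹ * ∑ j, ‖x j - y j‖ :=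
      mul_nonneg (inv_nonneg.mpr (Real.sqrt_nonneg _))
        (Finset.sum_nonneg fun j _ => norm_nonneg _)
    linarith [crest_nonneg hT y]

lemma abs_crest_sub_le (hT : 0 < T) (x y : Fin n → ℂ) :
    |crest n T x - crest n T y| ≤ (Real.sqrt n)⁻¹ * ∑ j, ‖x j - y j‖ := by
  rw [abs_le]
  constructor
  · have := crest_le_add hT y x
    have hsym : ∑ j, ‖y j - x j‖ = ∑ j, ‖x j - y j‖ :=
      Finset.sum_congr rfl fun j _ => norm_sub_rev _ _
    linarith [hsym ▸ this]
  · linarith [crest_le_add hT x y]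

lemma crest_zero (hT : 0 < T) : crest n T (0 : Fin n → ℂ) = 0 := by
  refine le_antisymm (Real.sSup_le ?_ le_rfl) (crest_nonneg hT 0)
  rintro _ ⟨t, _, rfl⟩
  simp [ofdm]

lemma sqrt_inv_mul_n (hn : 0 < n) : (Real.sqrt n)⁻¹ * (n:ℝ) = Real.sqrt n := by
  have hs : (0:ℝ) < Real.sqrt n := Real.sqrt_pos.mpr (by exact_mod_cast hn)
  field_simp
  rw [Real.sq_sqrt (by positivity)]

lemma crest_le_sqrt (hn : 0 < n) (hT : 0 < T) (x : Fin n → ℂ)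
    (hx : ∀ j, ‖x j‖ ≤ 1) : crest n T x ≤ Real.sqrt n := by
  have h := crest_le_add hT x (0 : Fin n → ℂ)
  rw [crest_zero hT] at h
  simp only [Pi.zero_apply] at h
  have h2 : ∑ j : Fin n, ‖x j - 0‖ ≤ (n : ℝ) := by
    calc ∑ j : Fin n, ‖x j - 0‖ ≤ ∑ _j : Fin n, (1:ℝ) :=
          Finset.sum_le_sum fun j _ => by simpa using hx j
      _ = n := by simp
  have h3 : (Real.sqrt n)⁻¹ * ∑ j : Fin n, ‖x j - 0‖ ≤ (Real.sqrt n)⁻¹ * n := by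
    gcongr
  rw [sqrt_inv_mul_n hn] at h3
  linarith

/-- difference when changing one coordinate -/
lemma abs_crest_update_sub_update (hT : 0 < T) (x : Fin n → ℂ) (k : Fin n) (u v : ℂ) :
    |crest n T (Function.update x k u) - crest n T (Function.update x k v)| ≤
      (Real.sqrt n)⁻¹ * ‖u - v‖ := by
  have h := abs_crest_sub_le hT (Function.update x k u) (Function.update x k v)
  have hsum : ∑ j : Fin n, ‖Function.update x k u j - Function.update x k v j‖ = ‖u - v‖ := by
    rw [Finset.sum_eq_single k]
    · simp
    · intro j _ hj
      simp [Function.update_of_ne hj]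
    · simp
  rwa [hsum] at h

lemma abs_crest_sub_update (hT : 0 < T) (x : Fin n → ℂ) (k : Fin n) (v : ℂ) :
    |crest n T x - crest n T (Function.update x k v)| ≤ (Real.sqrt n)⁻¹ * ‖x k - v‖ := by
  have := abs_crest_update_sub_update hT x k (x k) v
  rwa [Function.update_eq_self] at this

lemma continuous_crest (hn : 0 < n) (hT : 0 < T) : Continuous (crest n T) := by
  have h1 : (1:ℝ) ≤ Real.sqrt n := by
    rw [show (1:ℝ) = Real.sqrt 1 by simp]
    exact Real.sqrt_le_sqrt (by exact_mod_cast hn)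
  refine (LipschitzWith.of_dist_le_mul (K := n) fun x y => ?_).continuous
  rw [Real.dist_eq]
  refine le_trans (abs_crest_sub_le hT x y) ?_
  have h2 : (Real.sqrt n)⁻¹ * ∑ j, ‖x j - y j‖ ≤ ∑ j, ‖x j - y j‖ := by
    have hs : (0:ℝ) ≤ ∑ j : Fin n, ‖x j - y j‖ :=
      Finset.sum_nonneg fun j _ => norm_nonneg _
    nlinarith [inv_le_one_of_one_le₀ h1, inv_nonneg.mpr (Real.sqrt_nonneg (n:ℝ))]
  refine le_trans h2 ?_
  calc ∑ j : Fin n, ‖x j - y j‖ ≤ ∑ _j : Fin n, dist x y := by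
        refine Finset.sum_le_sum fun j _ => ?_
        rw [← dist_eq_norm]
        exact dist_le_pi_dist x y j
    _ = n * dist x y := by simp [mul_comm]
  

end CrestAux

open ProbabilityTheory in
lemma condexp_sup_indep {Ω : Type*} {m₁ mG mH : MeasurableSpace Ω}
    {m0 : MeasurableSpace Ω} (μ : Measure Ω)
    [IsProbabilityMeasure μ]
    (hm₁ : m₁ ≤ m0) (hG₁ : mG ≤ m₁) (hH : mH ≤ m0)
    (hindep : ProbabilityTheory.Indep m₁ mH μ) {W : Ω → ℝ}
    (hWmeas : Measurable[m₁] W) (hWint : Integrable W μ) :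
    μ[W | mG ⊔ mH] =ᵐ[μ] μ[W | mG] := by
  have hG : mG ≤ m0 := hG₁.trans hm₁
  have hm : mG ⊔ mH ≤ m0 := sup_le hG hH
  set c : Ω → ℝ := μ[W | mG] with hc
  have hcint : Integrable c μ := integrable_condExp
  have hcmeas : Measurable[m₁] c :=
    ((stronglyMeasurable_condExp (m := mG)).mono hG₁).measurable
  -- the key integral identity on products
  have hprod : ∀ (f : Ω → ℝ), Measurable[m₁] f → Integrable f μ →
      ∀ g h : Set Ω, MeasurableSet[mG] g → MeasurableSet[mH] h →
      ∫ x in g ∩ h, f x ∂μ = (∫ x in g, f x ∂μ) * (μ h).toReal := by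
    intro f hf hfint g h hg hh
    have hgm0 : MeasurableSet[m0] g := hG _ hg
    have hhm0 : MeasurableSet[m0] h := hH _ hh
    have hu : Measurable[m₁] (g.indicator f) := hf.indicator (hG₁ _ hg)
    have hv : Measurable[mH] (h.indicator (1 : Ω → ℝ)) := measurable_const.indicator hh
    have hIF : IndepFun (g.indicator f) (h.indicator (1 : Ω → ℝ)) μ := by
      rw [IndepFun_iff_Indep]
      exact indep_of_indep_of_le_left
        (indep_of_indep_of_le_right hindep (measurable_iff_comap_le.mp hv))
        (measurable_iff_comap_le.mp hu)
    have heq : Set.indicator (g ∩ h) f = g.indicator f * h.indicator (1 : Ω → ℝ) := by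
      funext x
      by_cases hx1 : x ∈ g <;> by_cases hx2 : x ∈ h <;>
        simp [Set.indicator_apply, hx1, hx2, Set.mem_inter_iff]
    calc ∫ x in g ∩ h, f x ∂μ = ∫ x, Set.indicator (g ∩ h) f x ∂μ :=
          (integral_indicator (hgm0.inter hhm0)).symm
      _ = ∫ x, (g.indicator f * h.indicator (1 : Ω → ℝ)) x ∂μ := by rw [heq]
      _ = (∫ x, g.indicator f x ∂μ) * ∫ x, h.indicator (1 : Ω → ℝ) x ∂μ :=
          ProbabilityTheory.IndepFun.integral_mul_eq_mul_integral hIF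
            (hfint.indicator hgm0).aestronglyMeasurable
            ((integrable_const 1).indicator hhm0).aestronglyMeasurable
      _ = (∫ x in g, f x ∂μ) * (μ h).toReal := by
          rw [integral_indicator hgm0, integral_indicator_one hhm0]
          rfl
  have key : ∀ ⦃s : Set Ω⦄, MeasurableSet[mG ⊔ mH] s →
      ∫ x in s, c x ∂μ = ∫ x in s, W x ∂μ := by
    have h_eq : (mG ⊔ mH) = MeasurableSpace.generateFrom
        {s | ∃ g h : Set Ω, MeasurableSet[mG] g ∧ MeasurableSet[mH] h ∧ s = g ∩ h} := by
      refine le_antisymm (sup_le ?_ ?_) (MeasurableSpace.generateFrom_le ?_)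
      · intro s hs
        exact MeasurableSpace.measurableSet_generateFrom
          ⟨s, Set.univ, hs, MeasurableSet.univ, (Set.inter_univ s).symm⟩
      · intro s hs
        exact MeasurableSpace.measurableSet_generateFrom
          ⟨Set.univ, s, MeasurableSet.univ, hs, (Set.univ_inter s).symm⟩
      · rintro s ⟨g, h, hg, hh, rfl⟩
        exact ((le_sup_left : mG ≤ mG ⊔ mH) _ hg).inter ((le_sup_right : mH ≤ mG ⊔ mH) _ hh)
    have h_inter : IsPiSystem
        {s | ∃ g h : Set Ω, MeasurableSet[mG] g ∧ MeasurableSet[mH] h ∧ s = g ∩ h} := by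
      rintro s ⟨g1, h1, hg1, hh1, rfl⟩ t ⟨g2, h2, hg2, hh2, rfl⟩ -
      exact ⟨g1 ∩ g2, h1 ∩ h2, hg1.inter hg2, hh1.inter hh2, by
        rw [Set.inter_inter_inter_comm]⟩
    refine MeasurableSpace.induction_on_inter (m := mG ⊔ mH) h_eq h_inter (by simp) ?_ ?_ ?_
    · rintro s ⟨g, h, hg, hh, rfl⟩
      rw [hprod c hcmeas hcint g h hg hh, hprod W hWmeas hWint g h hg hh,
        setIntegral_condExp hG hWint hg]
    · intro t ht hC
      have htm0 : MeasurableSet[m0] t := hm _ ht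
      have h1 := integral_add_compl htm0 hcint
      have h2 := integral_add_compl htm0 hWint
      have h3 : ∫ x, c x ∂μ = ∫ x, W x ∂μ := integral_condExp hG
      linarith
    · intro f hdisj hmeasf hCf
      have hm0 : ∀ i, MeasurableSet[m0] (f i) := fun i => hm _ (hmeasf i)
      rw [integral_iUnion hm0 hdisj hcint.integrableOn,
        integral_iUnion hm0 hdisj hWint.integrableOn]
      exact tsum_congr hCf
  exact (ae_eq_condExp_of_forall_setIntegral_eq hm hWint
    (fun s _ _ => hcint.integrableOn)
    (fun s hs _ => key hs)
    ((stronglyMeasurable_condExp (m := mG) (μ := μ) (f := W)).mono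
      (le_sup_left : mG ≤ mG ⊔ mH)).aestronglyMeasurable).symm

theorem doob_sq_bound {Ω : Type*} {m₁ mG mH : MeasurableSpace Ω}
    {m0 : MeasurableSpace Ω} (μ : Measure Ω) [IsProbabilityMeasure μ]
    (hm₁ : m₁ ≤ m0) (hG₁ : mG ≤ m₁) (hH : mH ≤ m0)
    (hindep : ProbabilityTheory.Indep m₁ mH μ) (Z W : Ω → ℝ)
    (hZint : Integrable Z μ) (hWint : Integrable W μ)
    (hWmeas : Measurable[m₁] W) (r : NNReal)
    (hbd : ∀ᵐ ω ∂μ, |Z ω - W ω| ≤ (r : ℝ)) :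
    ∀ᵐ ω ∂μ,
      (μ[(fun ω' => ((μ[Z | mG ⊔ mH]) ω' - (μ[Z | mG]) ω') ^ 2) | mG]) ω ≤ (r : ℝ) * r := by
  have hG : mG ≤ m0 := hG₁.trans hm₁
  have hFi : mG ⊔ mH ≤ m0 := sup_le hG hH
  have hle : mG ≤ mG ⊔ mH := le_sup_left
  have hZWint : Integrable (Z - W) μ := hZint.sub hWint
  set A : Ω → ℝ := μ[Z - W | mG ⊔ mH] with hAdef
  set c : Ω → ℝ := μ[Z - W | mG] with hcdef
  have hAint : Integrable A μ := integrable_condExp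
  have hcint : Integrable c μ := integrable_condExp
  have hZWbd : ∀ᵐ ω ∂μ, |(Z - W) ω| ≤ (r : ℝ) := by
    filter_upwards [hbd] with ω h
    simpa [Pi.sub_apply] using h
  have hA_bd : ∀ᵐ ω ∂μ, |A ω| ≤ (r : ℝ) := ae_bdd_condExp_of_ae_bdd hZWbd
  have hc_bd : ∀ᵐ ω ∂μ, |c ω| ≤ (r : ℝ) := ae_bdd_condExp_of_ae_bdd hZWbd
  have hA_sm : StronglyMeasurable A := stronglyMeasurable_condExp.mono hFi
  have hc_smG : StronglyMeasurable[mG] c := stronglyMeasurable_condExp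
  have hc_sm : StronglyMeasurable c := hc_smG.mono hG
  have hbb : μ[W | mG ⊔ mH] =ᵐ[μ] μ[W | mG] :=
    condexp_sup_indep μ hm₁ hG₁ hH hindep hWmeas hWint
  have hAsub : A =ᵐ[μ] μ[Z | mG ⊔ mH] - μ[W | mG ⊔ mH] := condExp_sub hZint hWint _
  have hcsub : c =ᵐ[μ] μ[Z | mG] - μ[W | mG] := condExp_sub hZint hWint _
  have hYdiff : (fun ω => (μ[Z | mG ⊔ mH]) ω - (μ[Z | mG]) ω) =ᵐ[μ]
      fun ω => A ω - c ω := by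
    filter_upwards [hAsub, hcsub, hbb] with ω h1 h2 h3
    simp only [Pi.sub_apply] at h1 h2
    rw [h1, h2, h3]
    ring
  have htower : μ[A | mG] =ᵐ[μ] c := condExp_condExp_of_le hle hFi
  set P : Ω → ℝ := fun ω => A ω * A ω with hPdef
  set q : Ω → ℝ := fun ω => 2 * A ω - c ω with hqdef
  have hPint : Integrable P μ := by
    refine Integrable.mono' (integrable_const ((r : ℝ) * r))
      ((hA_sm.mul hA_sm).aestronglyMeasurable) ?_
    filter_upwards [hA_bd] with ω h
    rw [Real.norm_eq_abs, abs_mul]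
    exact mul_le_mul h h (abs_nonneg _) r.2
  have hqint : Integrable q μ := (hAint.const_mul 2).sub hcint
  have hq_sm : StronglyMeasurable q := (hA_sm.const_mul 2).sub hc_sm
  have hQint : Integrable (c * q) μ := by
    refine Integrable.mono' (integrable_const ((r : ℝ) * (3 * r)))
      ((hc_sm.mul hq_sm).aestronglyMeasurable) ?_
    filter_upwards [hA_bd, hc_bd] with ω h1 h2
    rw [Real.norm_eq_abs, Pi.mul_apply, abs_mul]
    have hq_bd : |q ω| ≤ 3 * (r : ℝ) := by
      simp only [hqdef]
      calc |2 * A ω - c ω| ≤ |2 * A ω| + |c ω| := abs_sub _ _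
        _ = 2 * |A ω| + |c ω| := by rw [abs_mul]; norm_num
        _ ≤ 2 * (r : ℝ) + (r : ℝ) := by linarith
        _ = 3 * r := by ring
    exact mul_le_mul h2 hq_bd (abs_nonneg _) r.2
  have hsq_eq : (fun ω => (A ω - c ω) ^ 2) = P - c * q := by
    funext ω
    simp only [Pi.sub_apply, Pi.mul_apply, hPdef, hqdef]
    ring
  have E1 : μ[(fun ω' => ((μ[Z | mG ⊔ mH]) ω' - (μ[Z | mG]) ω') ^ 2) | mG] =ᵐ[μ]
      μ[(fun ω => (A ω - c ω) ^ 2) | mG] := by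
    refine condExp_congr_ae ?_
    filter_upwards [hYdiff] with ω h
    rw [h]
  have E2 : μ[(fun ω => (A ω - c ω) ^ 2) | mG] =ᵐ[μ] μ[P | mG] - μ[c * q | mG] := by
    rw [hsq_eq]
    exact condExp_sub hPint hQint _
  have E3 : μ[c * q | mG] =ᵐ[μ] c * μ[q | mG] :=
    condExp_mul_of_stronglyMeasurable_left hc_smG hQint hqint
  have E4 : μ[q | mG] =ᵐ[μ] c := by
    have hq_eq : q = (2:ℝ) • A - c := by
      funext ω
      simp only [Pi.sub_apply, Pi.smul_apply, smul_eq_mul, hqdef]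
    rw [hq_eq]
    have h1 : μ[(2:ℝ) • A - c | mG] =ᵐ[μ] μ[(2:ℝ) • A | mG] - μ[c | mG] :=
      condExp_sub (hAint.smul (2:ℝ)) hcint _
    have h2 : μ[(2:ℝ) • A | mG] =ᵐ[μ] (2:ℝ) • μ[A | mG] := condExp_smul (2:ℝ) A _
    have h3 : μ[c | mG] = c := condExp_of_stronglyMeasurable hG hc_smG hcint
    filter_upwards [h1, h2, htower] with ω e1 e2 e3
    rw [e1]
    simp only [Pi.sub_apply]
    rw [e2]
    simp only [Pi.smul_apply, smul_eq_mul]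
    rw [e3, h3]
    ring
  have E5 : μ[P | mG] ≤ᵐ[μ] fun _ => (r : ℝ) * r := by
    have hPle : P ≤ᵐ[μ] fun _ => (r : ℝ) * r := by
      filter_upwards [hA_bd] with ω h
      simp only [hPdef]
      calc A ω * A ω = |A ω| * |A ω| := by rw [← abs_mul, abs_mul_self]
        _ ≤ (r : ℝ) * r := mul_le_mul h h (abs_nonneg _) r.2
    have hmono := condExp_mono (m := mG) hPint (integrable_const _) hPle
    have hconst : μ[(fun _ => (r : ℝ) * r : Ω → ℝ) | mG] = fun _ => (r : ℝ) * r :=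
      condExp_const hG _
    rw [hconst] at hmono
    exact hmono
  filter_upwards [E1, E2, E3, E4, E5] with ω e1 e2 e3 e4 e5
  rw [e1, e2]
  simp only [Pi.sub_apply]
  rw [e3]
  simp only [Pi.mul_apply]
  rw [e4]
  have hcc : 0 ≤ c ω * c ω := mul_self_nonneg _
  linarith


open CrestAux in
theorem stmt_4 {Ω : Type*} [MeasurableSpace Ω] (μ : Measure Ω) [IsProbabilityMeasure μ]
    (n M : ℕ) (hn : 0 < n) (hM : 2 ≤ M) (T : ℝ) (hT : 0 < T)
    (X : Fin n → Ω → ℂ) (hmeas : ∀ j, Measurable (X j))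
    (hiid : ProbabilityTheory.iIndepFun X μ)
    (hdist : ∀ j, Measure.map (X j) μ = pskMeasure M)
    (F : ℕ → MeasurableSpace Ω)
    (hF : ∀ i, F i = ⨆ j : Fin n, ⨆ _ : (j : ℕ) < i, MeasurableSpace.comap (X j) inferInstance)
    (Y : ℕ → Ω → ℝ)
    (hY : ∀ i, Y i = μ[(fun ω => crest n T (fun j => X j ω)) | F i]) :
    ∀ i, 1 ≤ i → i ≤ n →
      ∀ᵐ ω ∂μ,
        (μ[(fun ω' => (Y i ω' - Y (i - 1) ω') ^ 2) | F (i - 1)]) ω ≤ 2 / n := by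
  intro i hi1 hin
  set Z : Ω → ℝ := fun ω => crest n T (fun j => X j ω) with hZdef
  have hkn : i - 1 < n := by omega
  set k : Fin n := ⟨i - 1, hkn⟩ with hkdef
  have hsqrt_pos : (0:ℝ) < Real.sqrt n := Real.sqrt_pos.mpr (by exact_mod_cast hn)
  -- σ-algebra facts
  have hFle : ∀ m, F m ≤ ‹MeasurableSpace Ω› := by
    intro m
    rw [hF]
    exact iSup_le fun j => iSup_le fun _ => (hmeas j).comap_le
  have hH_le : MeasurableSpace.comap (X k) inferInstance ≤ ‹MeasurableSpace Ω› :=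
    (hmeas k).comap_le
  have hsplit : F i = F (i - 1) ⊔ MeasurableSpace.comap (X k) inferInstance := by
    rw [hF i, hF (i - 1)]
    apply le_antisymm
    · refine iSup_le fun j => iSup_le fun hj => ?_
      by_cases hj' : (j : ℕ) < i - 1
      · exact le_sup_of_le_left (le_iSup_of_le j (le_iSup_of_le hj' le_rfl))
      · have : j = k := Fin.ext (by simp only [hkdef]; omega)
        rw [this]
        exact le_sup_right
    · refine sup_le (iSup_le fun j => iSup_le fun hj => ?_) ?_
      · exact le_iSup_of_le j (le_iSup_of_le (by omega) le_rfl)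
      · exact le_iSup_of_le k (le_iSup_of_le (show ((k : ℕ) < i) by
          simp only [hkdef]; omega) le_rfl)
  have hm₁_le : (⨆ j ∈ ({k}ᶜ : Set (Fin n)), MeasurableSpace.comap (X j) inferInstance) ≤
      ‹MeasurableSpace Ω› :=
    iSup_le fun j => iSup_le fun _ => (hmeas j).comap_le
  have hG₁ : F (i - 1) ≤
      ⨆ j ∈ ({k}ᶜ : Set (Fin n)), MeasurableSpace.comap (X j) inferInstance := by
    rw [hF]
    refine iSup_le fun j => iSup_le fun hj => ?_
    refine le_biSup (fun j => MeasurableSpace.comap (X j) inferInstance) ?_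
    intro hjk
    have hjk' : j = k := hjk
    have : (j : ℕ) = i - 1 := by rw [hjk']
    omega
  have hindep : ProbabilityTheory.Indep
      (⨆ j ∈ ({k}ᶜ : Set (Fin n)), MeasurableSpace.comap (X j) inferInstance)
      (MeasurableSpace.comap (X k) inferInstance) μ := by
    have hind := ProbabilityTheory.indep_biSup_compl
      (fun j => (hmeas j).comap_le) hiid.iIndep ({k}ᶜ : Set (Fin n))
    rw [compl_compl] at hind
    exact ProbabilityTheory.indep_of_indep_of_le_right hind
      (le_biSup (fun j => MeasurableSpace.comap (X j) inferInstance) (Set.mem_singleton k))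
  -- the constellation
  have hval_norm : ∀ l : ℕ,
      ‖Complex.exp (Complex.I * (((2 * l + 1) * Real.pi / M : ℝ) : ℂ))‖ = 1 :=
    fun l => norm_exp_I_mul_real _
  set S : Finset ℂ := (Finset.range M).image
    (fun l : ℕ => Complex.exp (Complex.I * (((2 * l + 1) * Real.pi / M : ℝ) : ℂ))) with hSdef
  have hSne : S.Nonempty :=
    ⟨_, Finset.mem_image_of_mem _ (Finset.mem_range.2 (show 0 < M by omega))⟩
  have hSnorm : ∀ v ∈ S, ‖v‖ = 1 := by
    intro v hv
    obtain ⟨l, _, rfl⟩ := Finset.mem_image.mp hv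
    exact hval_norm l
  have hXmem : ∀ᵐ ω ∂μ, ∀ j, X j ω ∈ (↑S : Set ℂ) := by
    rw [ae_all_iff]
    intro j
    have hSm : MeasurableSet (↑S : Set ℂ) := S.measurableSet
    rw [ae_iff]
    have hset : {ω | ¬ X j ω ∈ (↑S : Set ℂ)} = X j ⁻¹' (↑S : Set ℂ)ᶜ := rfl
    rw [hset, ← Measure.map_apply (hmeas j) hSm.compl, hdist j]
    unfold pskMeasure
    rw [Measure.smul_apply, Measure.finset_sum_apply]
    have hz : ∀ l ∈ Finset.range M,
        Measure.dirac (Complex.exp (Complex.I * (((2 * l + 1) * Real.pi / M : ℝ) : ℂ)))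
          (↑S : Set ℂ)ᶜ = 0 := by
      intro l hl
      rw [Measure.dirac_apply' _ hSm.compl]
      have hmem : Complex.exp (Complex.I * (((2 * l + 1) * Real.pi / M : ℝ) : ℂ))
          ∈ (↑S : Set ℂ) :=
        Finset.mem_coe.mpr (Finset.mem_image_of_mem _ hl)
      rw [Set.indicator_of_notMem (Set.notMem_compl_iff.mpr hmem)]
    rw [Finset.sum_congr rfl hz]
    simp
  -- the midpoint function W
  set f : (Fin n → ℂ) → ℂ → ℝ := fun x v => crest n T (Function.update x k v) with hfdef
  have hf_cont : ∀ v, Continuous fun x => f x v := by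
    intro v
    refine (continuous_crest hn hT).comp ?_
    refine continuous_pi fun j => ?_
    have h : (fun x : Fin n → ℂ => Function.update x k v j) =
        fun x : Fin n → ℂ => if j = k then v else x j := by
      funext x
      rw [Function.update_apply]
    rw [h]
    by_cases hj : j = k
    · simp only [hj, if_true]
      exact continuous_const
    · simp only [hj, if_false]
      exact continuous_apply j
  set w : (Fin n → ℂ) → ℝ :=
    fun x => (S.sup' hSne (f x) + S.inf' hSne (f x)) / 2 with hwdef
  have hw_cont : Continuous w := by
    have h1 : Continuous fun x => S.sup' hSne (f x) :=
      continuous_iff_continuousAt.mpr fun x =>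
        ContinuousAt.finset_sup'_apply hSne fun v _ => (hf_cont v).continuousAt
    have h2 : Continuous fun x => S.inf' hSne (f x) :=
      continuous_iff_continuousAt.mpr fun x =>
        ContinuousAt.finset_inf'_apply hSne fun v _ => (hf_cont v).continuousAt
    exact (h1.add h2).div_const 2
  set ξ : Ω → (Fin n → ℂ) := fun ω j => if j = k then 0 else X j ω with hξdef
  have hξmeas : Measurable[⨆ j ∈ ({k}ᶜ : Set (Fin n)),
      MeasurableSpace.comap (X j) inferInstance] ξ := by
    refine @measurable_pi_lambda Ω (Fin n) (fun _ => ℂ)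
      (⨆ j ∈ ({k}ᶜ : Set (Fin n)), MeasurableSpace.comap (X j) inferInstance) _ ξ fun j => ?_
    by_cases hj : j = k
    · have he : (fun ω => ξ ω j) = fun _ => (0 : ℂ) := by
        funext ω; simp [hξdef, hj]
      rw [he]
      exact @measurable_const ℂ Ω _ _ 0
    · have he : (fun ω => ξ ω j) = fun ω => X j ω := by
        funext ω; simp [hξdef, hj]
      rw [he]
      exact measurable_iff_comap_le.mpr
        (le_biSup (fun j => MeasurableSpace.comap (X j) inferInstance) hj)
  set W : Ω → ℝ := fun ω => w (ξ ω) with hWdef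
  have hξupd : ∀ ω v, Function.update (ξ ω) k v = Function.update (fun j => X j ω) k v := by
    intro ω v
    funext j
    by_cases hj : j = k
    · rw [hj]; simp
    · rw [Function.update_of_ne hj, Function.update_of_ne hj]
      simp [hξdef, hj]
  have hfξ : ∀ ω v, f (ξ ω) v = f (fun j => X j ω) v := by
    intro ω v
    simp only [hfdef]
    rw [hξupd]
  have hWmeas₁ : Measurable[⨆ j ∈ ({k}ᶜ : Set (Fin n)),
      MeasurableSpace.comap (X j) inferInstance] W :=
    hw_cont.measurable.comp hξmeas
  have hWmeas : Measurable W := hWmeas₁.mono hm₁_le le_rfl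
  have hZmeas : Measurable Z :=
    (continuous_crest hn hT).measurable.comp (measurable_pi_lambda _ hmeas)
  -- pointwise bounds
  have hptwise : ∀ᵐ ω ∂μ, |Z ω - W ω| ≤ (Real.sqrt n)⁻¹ ∧ |W ω| ≤ Real.sqrt n ∧
      |Z ω| ≤ Real.sqrt n := by
    filter_upwards [hXmem] with ω hω
    have hxnorm : ∀ j, ‖X j ω‖ = 1 := fun j => hSnorm _ (Finset.mem_coe.mp (hω j))
    have hupd : ∀ v ∈ S, ∀ j, ‖Function.update (fun j => X j ω) k v j‖ ≤ 1 := by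
      intro v hv j
      rw [Function.update_apply]
      by_cases hj : j = k
      · rw [if_pos hj, hSnorm v hv]
      · rw [if_neg hj]
        exact (hxnorm j).le
    have hcrest_le : ∀ v ∈ S, f (fun j => X j ω) v ≤ Real.sqrt n :=
      fun v hv => crest_le_sqrt hn hT _ (hupd v hv)
    have hcrest_nn : ∀ v ∈ S, 0 ≤ f (fun j => X j ω) v := fun v _ => crest_nonneg hT _
    have hsup_le : S.sup' hSne (f (fun j => X j ω)) ≤ Real.sqrt n :=
      Finset.sup'_le _ _ hcrest_le
    have hinf_nn : 0 ≤ S.inf' hSne (f (fun j => X j ω)) := Finset.le_inf' _ _ hcrest_nn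
    have hxk : X k ω ∈ S := Finset.mem_coe.mp (hω k)
    have hZx : Z ω = f (fun j => X j ω) (X k ω) := by
      simp only [hZdef, hfdef]
      rw [Function.update_eq_self]
    have hle1 : S.inf' hSne (f (fun j => X j ω)) ≤ Z ω := hZx ▸ Finset.inf'_le _ hxk
    have hle2 : Z ω ≤ S.sup' hSne (f (fun j => X j ω)) := hZx ▸ Finset.le_sup' _ hxk
    have hgap : S.sup' hSne (f (fun j => X j ω)) - S.inf' hSne (f (fun j => X j ω)) ≤
        (Real.sqrt n)⁻¹ * 2 := by
      obtain ⟨v1, hv1, he1⟩ := Finset.exists_mem_eq_sup' hSne (f (fun j => X j ω))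
      obtain ⟨v2, hv2, he2⟩ := Finset.exists_mem_eq_inf' hSne (f (fun j => X j ω))
      rw [he1, he2]
      have h1 : |f (fun j => X j ω) v1 - f (fun j => X j ω) v2| ≤
          (Real.sqrt n)⁻¹ * ‖v1 - v2‖ :=
        abs_crest_update_sub_update hT _ k v1 v2
      have h2 : ‖v1 - v2‖ ≤ 2 := by
        calc ‖v1 - v2‖ ≤ ‖v1‖ + ‖v2‖ := norm_sub_le _ _
          _ = 2 := by rw [hSnorm v1 hv1, hSnorm v2 hv2]; norm_num
      have h3 : (Real.sqrt n)⁻¹ * ‖v1 - v2‖ ≤ (Real.sqrt n)⁻¹ * 2 := by gcongr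
      calc f (fun j => X j ω) v1 - f (fun j => X j ω) v2
          ≤ |f (fun j => X j ω) v1 - f (fun j => X j ω) v2| := le_abs_self _
        _ ≤ _ := le_trans h1 h3
    have hWx : W ω = (S.sup' hSne (f (fun j => X j ω)) +
        S.inf' hSne (f (fun j => X j ω))) / 2 := by
      simp only [hWdef, hwdef]
      rw [show f (ξ ω) = f (fun j => X j ω) from funext fun v => hfξ ω v]
    have hinv_nn : (0:ℝ) ≤ (Real.sqrt n)⁻¹ := inv_nonneg.mpr hsqrt_pos.le
    refine ⟨?_, ?_, ?_⟩
    · rw [hWx, abs_le]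
      constructor <;> linarith
    · rw [hWx, abs_le]
      constructor <;> linarith
    · rw [abs_le]
      constructor <;> linarith
  -- integrability
  have hZint : Integrable Z μ := by
    refine Integrable.mono' (integrable_const (Real.sqrt n)) hZmeas.aestronglyMeasurable ?_
    filter_upwards [hptwise] with ω h
    simpa [Real.norm_eq_abs] using h.2.2
  have hWint : Integrable W μ := by
    refine Integrable.mono' (integrable_const (Real.sqrt n)) hWmeas.aestronglyMeasurable ?_
    filter_upwards [hptwise] with ω h
    simpa [Real.norm_eq_abs] using h.2.1
  -- apply the abstract bound
  set r : NNReal := ⟨(Real.sqrt n)⁻¹, inv_nonneg.mpr hsqrt_pos.le⟩ with hrdef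
  have haux := doob_sq_bound μ hm₁_le hG₁ hH_le hindep Z W hZint hWint hWmeas₁ r
    (by filter_upwards [hptwise] with ω h; exact h.1)
  rw [hY i, hY (i - 1), hsplit]
  filter_upwards [haux] with ω h
  have hrr : (r : ℝ) * r = (n : ℝ)⁻¹ := by
    simp only [hrdef, NNReal.coe_mk]
    show (Real.sqrt n)⁻¹ * (Real.sqrt n)⁻¹ = (n:ℝ)⁻¹
    rw [← mul_inv, Real.mul_self_sqrt (by positivity)]
  rw [hrr] at h
  have h2n : ((n : ℝ))⁻¹ ≤ 2 / n := by
    rw [div_eq_mul_inv]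
    have hpos : (0:ℝ) ≤ ((n : ℝ))⁻¹ := by positivity
    linarith
  exact le_trans h h2n
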